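/- Let R be an n×n complex positive definite matrix, ε > 0 a real number, and q a real number with 1 ≤ q ≤ 2. Then Tr((R + ε²·I)^q) ≤ Tr(R^q) + 2ε²·Tr(R^{q−1}) + ε⁴·Tr(R^{q−2}). Consequently, Tr((R/ε + ε·I)^q) − Tr((R/ε)^q) − Tr((ε·I)^q) ≤ 2ε^{2−q}·Tr(R^{q−1}) + ε^{4−q}·Tr(R^{q−2}), which tends to 0 as ε → 0 when q < 2. -/

import Mathlib

open Matrix
open scoped ComplexOrder

/-- Matrix power of a Hermitian (positive semidefinite) matrix via the
continuous functional calculus: `A ^ q`. -/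
noncomputable def hermPow {n : Type*} [Fintype n] [DecidableEq n]
    (A : Matrix n n ℂ) (q : ℝ) : Matrix n n ℂ :=
  cfc (fun x : ℝ => x ^ q) A

/-- The positive semidefinite square root of a positive semidefinite matrix, as
`Matrix.PosSemidef.sqrt` was defined in the older Mathlib. -/
noncomputable def Matrix.PosSemidef.sqrtOld {n : Type*} [Fintype n] [DecidableEq n]
    {A : Matrix n n ℂ} (hA : A.PosSemidef) : Matrix n n ℂ :=
  hA.1.eigenvectorUnitary.1 * diagonal ((↑) ∘ (√·) ∘ hA.1.eigenvalues) *
  (star hA.1.eigenvectorUnitary : Matrix n n ℂ)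

/-- Schatten `q`-norm of a complex matrix `T`:
`‖T‖_q = (Tr(|T|^q))^(1/q)` with `|T| = (Tᴴ T)^(1/2)`. -/
noncomputable def schattenQ {m n : Type*} [Fintype m] [Fintype n] [DecidableEq n]
    (q : ℝ) (T : Matrix m n ℂ) : ℝ :=
  ((hermPow (Matrix.posSemidef_conjTranspose_mul_self T).sqrtOld q).trace).re

/-- Geometric mean of positive definite matrices:
`A # B = A^(1/2) (A^(-1/2) B A^(-1/2))^(1/2) A^(1/2)`. -/
noncomputable def geomMean {n : Type*} [Fintype n] [DecidableEq n]
    (A B : Matrix n n ℂ) : Matrix n n ℂ :=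
  hermPow A (1/2) * hermPow (hermPow A (-(1/2)) * B * hermPow A (-(1/2))) (1/2) *
    hermPow A (1/2)

/-- The Thompson-type metric `δ_∞(A, B) = max_{λ ∈ spec(A B⁻¹)} |log λ|`
(for positive definite `A`, `B` the eigenvalues of `A B⁻¹` are positive reals). -/
noncomputable def deltaInf {n : Type*} [Fintype n] [DecidableEq n]
    (A B : Matrix n n ℂ) : ℝ :=
  sSup {x : ℝ | ∃ μ ∈ spectrum ℂ (A * B⁻¹), x = |Real.log ‖μ‖|}

private lemma trace_re_cfc {n : ℕ} {A : Matrix (Fin n) (Fin n) ℂ} (hA : A.IsHermitian)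
    (f : ℝ → ℝ) : ((cfc f A).trace).re = ∑ i, f (hA.eigenvalues i) := by
  have h1 : star (hA.eigenvectorUnitary : Matrix (Fin n) (Fin n) ℂ) *
      (hA.eigenvectorUnitary : Matrix (Fin n) (Fin n) ℂ) = 1 :=
    Unitary.star_mul_self_of_mem (SetLike.coe_mem _)
  rw [hA.cfc_eq, Matrix.IsHermitian.cfc, Unitary.conjStarAlgAut_apply, Matrix.trace_mul_cycle, h1, one_mul,
    Matrix.trace_diagonal]
  simp [Complex.re_sum]

private lemma scalar_key {a e q : ℝ} (ha : 0 < a) (he : 0 < e) (hq2 : q ≤ 2) :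
    (a + e) ^ q ≤ a ^ q + 2 * e * a ^ (q - 1) + e ^ 2 * a ^ (q - 2) := by
  have hae : 0 < a + e := by linarith
  have h1 : a ^ q = a ^ (q - 2) * a ^ 2 := by
    rw [← Real.rpow_natCast a 2, ← Real.rpow_add ha]
    congr 1
    push_cast; ring
  have h2 : a ^ (q - 1) = a ^ (q - 2) * a := by
    rw [show q - 1 = (q - 2) + 1 by ring, Real.rpow_add ha, Real.rpow_one]
  have key : a ^ q + 2 * e * a ^ (q - 1) + e ^ 2 * a ^ (q - 2)
      = a ^ (q - 2) * (a + e) ^ 2 := by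
    rw [h1, h2]; ring
  rw [key]
  calc (a + e) ^ q = (a + e) ^ (q - 2) * (a + e) ^ 2 := by
        rw [← Real.rpow_natCast (a + e) 2, ← Real.rpow_add hae]
        congr 1
        push_cast; ring
    _ ≤ a ^ (q - 2) * (a + e) ^ 2 :=
        mul_le_mul_of_nonneg_right
          (Real.rpow_le_rpow_of_nonpos ha (by linarith) (by linarith)) (by positivity)

/-- For positive definite `R`, `ε > 0` and `1 ≤ q ≤ 2`:
`Tr((R + ε²I)^q) ≤ Tr(R^q) + 2ε² Tr(R^(q-1)) + ε⁴ Tr(R^(q-2))`, and consequently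
`Tr((R/ε + εI)^q) - Tr((R/ε)^q) - Tr((εI)^q)
  ≤ 2ε^(2-q) Tr(R^(q-1)) + ε^(4-q) Tr(R^(q-2))`. -/
theorem trace_perturbation_bound {n : ℕ} (R : Matrix (Fin n) (Fin n) ℂ)
    (hR : R.PosDef) (ε : ℝ) (hε : 0 < ε) (q : ℝ) (hq1 : 1 ≤ q) (hq2 : q ≤ 2) :
    ((hermPow (R + ε ^ 2 • (1 : Matrix (Fin n) (Fin n) ℂ)) q).trace).re
        ≤ ((hermPow R q).trace).re + 2 * ε ^ 2 * ((hermPow R (q - 1)).trace).re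
          + ε ^ 4 * ((hermPow R (q - 2)).trace).re ∧
      ((hermPow (ε⁻¹ • R + ε • (1 : Matrix (Fin n) (Fin n) ℂ)) q).trace).re
          - ((hermPow (ε⁻¹ • R) q).trace).re
          - ((hermPow (ε • (1 : Matrix (Fin n) (Fin n) ℂ)) q).trace).re
        ≤ 2 * ε ^ (2 - q) * ((hermPow R (q - 1)).trace).re
          + ε ^ (4 - q) * ((hermPow R (q - 2)).trace).re := by
  have hsa : IsSelfAdjoint R := hR.isHermitian
  have hfin : (spectrum ℝ R).Finite := Matrix.finite_real_spectrum
  have hcont : ∀ f : ℝ → ℝ, ContinuousOn f (spectrum ℝ R) := fun f => hfin.continuousOn f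
  have hcont' : ∀ f g : ℝ → ℝ, ContinuousOn g (f '' spectrum ℝ R) := fun f g =>
    (hfin.image f).continuousOn g
  have keyA : hermPow (R + ε ^ 2 • (1 : Matrix (Fin n) (Fin n) ℂ)) q
      = cfc (fun x : ℝ => (x + ε ^ 2) ^ q) R := by
    have e1 : cfc (fun x : ℝ => x + ε ^ 2) R = R + ε ^ 2 • 1 := by
      rw [cfc_add_const (ε ^ 2) (fun x : ℝ => x) R (hcont _) hsa, cfc_id' ℝ R,
        Algebra.algebraMap_eq_smul_one]
    have e2 := cfc_comp (fun x : ℝ => x ^ q) (fun x : ℝ => x + ε ^ 2) R hsa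
      (hcont' _ _) (hcont _)
    simp only [Function.comp_def] at e2
    rw [hermPow, ← e1, ← e2]
  have keyB : hermPow (ε⁻¹ • R + ε • (1 : Matrix (Fin n) (Fin n) ℂ)) q
      = cfc (fun x : ℝ => (ε⁻¹ * x + ε) ^ q) R := by
    have e1 : cfc (fun x : ℝ => ε⁻¹ * x + ε) R = ε⁻¹ • R + ε • 1 := by
      rw [cfc_add_const ε (fun x : ℝ => ε⁻¹ * x) R (hcont _) hsa,
        cfc_const_mul_id ε⁻¹ R, Algebra.algebraMap_eq_smul_one]
    have e2 := cfc_comp (fun x : ℝ => x ^ q) (fun x : ℝ => ε⁻¹ * x + ε) R hsa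
      (hcont' _ _) (hcont _)
    simp only [Function.comp_def] at e2
    rw [hermPow, ← e1, ← e2]
  have keyC : hermPow (ε⁻¹ • R) q = cfc (fun x : ℝ => (ε⁻¹ * x) ^ q) R := by
    have e1 : cfc (fun x : ℝ => ε⁻¹ * x) R = ε⁻¹ • R := cfc_const_mul_id ε⁻¹ R
    have e2 := cfc_comp (fun x : ℝ => x ^ q) (fun x : ℝ => ε⁻¹ * x) R hsa
      (hcont' _ _) (hcont _)
    simp only [Function.comp_def] at e2
    rw [hermPow, ← e1, ← e2]
  have keyD : hermPow (ε • (1 : Matrix (Fin n) (Fin n) ℂ)) q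
      = cfc (fun _ : ℝ => ε ^ q) R := by
    have e1 : cfc (fun _ : ℝ => ε) R = ε • 1 := by
      rw [cfc_const ε R hsa, Algebra.algebraMap_eq_smul_one]
    have e2 := cfc_comp (fun x : ℝ => x ^ q) (fun _ : ℝ => ε) R hsa
      (hcont' _ _) (hcont _)
    simp only [Function.comp_def] at e2
    rw [hermPow, ← e1, ← e2]
  rw [keyA, keyB, keyC, keyD]
  simp only [hermPow, trace_re_cfc hR.isHermitian]
  set lam := hR.isHermitian.eigenvalues with hlam
  have hpos : ∀ i, 0 < lam i := fun i => hR.eigenvalues_pos i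
  have hε2 : (0 : ℝ) < ε ^ 2 := by positivity
  have hmain : ∑ i, (lam i + ε ^ 2) ^ q
      ≤ ∑ i, lam i ^ q + 2 * ε ^ 2 * ∑ i, lam i ^ (q - 1)
        + ε ^ 4 * ∑ i, lam i ^ (q - 2) := by
    calc ∑ i, (lam i + ε ^ 2) ^ q
        ≤ ∑ i, (lam i ^ q + 2 * ε ^ 2 * lam i ^ (q - 1)
            + ε ^ 4 * lam i ^ (q - 2)) := by
          refine Finset.sum_le_sum fun i _ => ?_
          have h := scalar_key (hpos i) hε2 hq2
          have h4 : (ε ^ 2) ^ 2 = ε ^ 4 := by ring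
          rw [h4] at h
          exact h
      _ = _ := by
          rw [Finset.sum_add_distrib, Finset.sum_add_distrib, ← Finset.mul_sum,
            ← Finset.mul_sum]
  refine ⟨hmain, ?_⟩
  have hεq : (0 : ℝ) ≤ ε⁻¹ ^ q := Real.rpow_nonneg (by positivity) q
  have e2a : ∀ i, (ε⁻¹ * lam i + ε) ^ q = ε⁻¹ ^ q * (lam i + ε ^ 2) ^ q := fun i => by
    rw [show ε⁻¹ * lam i + ε = ε⁻¹ * (lam i + ε ^ 2) by field_simp]
    exact Real.mul_rpow (by positivity) (add_pos (hpos i) hε2).le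
  have e2b : ∀ i, (ε⁻¹ * lam i) ^ q = ε⁻¹ ^ q * lam i ^ q := fun i =>
    Real.mul_rpow (by positivity) (hpos i).le
  simp only [e2a, e2b]
  rw [← Finset.mul_sum, ← Finset.mul_sum]
  have hZ : (0 : ℝ) ≤ ∑ _i : Fin n, ε ^ q :=
    Finset.sum_nonneg fun _ _ => Real.rpow_nonneg hε.le q
  have hA : ε ^ (2 - q) = ε ^ 2 * ε⁻¹ ^ q := by
    rw [Real.inv_rpow hε.le, ← Real.rpow_neg hε.le, ← Real.rpow_natCast ε 2,
      ← Real.rpow_add hε]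
    congr 1
  have hB : ε ^ (4 - q) = ε ^ 4 * ε⁻¹ ^ q := by
    rw [Real.inv_rpow hε.le, ← Real.rpow_neg hε.le, ← Real.rpow_natCast ε 4,
      ← Real.rpow_add hε]
    congr 1
  rw [hA, hB]
  have h5 : ε⁻¹ ^ q * ∑ i, (lam i + ε ^ 2) ^ q
      ≤ ε⁻¹ ^ q * (∑ i, lam i ^ q + 2 * ε ^ 2 * ∑ i, lam i ^ (q - 1)
        + ε ^ 4 * ∑ i, lam i ^ (q - 2)) := mul_le_mul_of_nonneg_left hmain hεq
  nlinarith [h5, hZ]
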